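/- Let k ≥ 1 and let i₁ < j₁ < i₂ < j₂ < ⋯ < i_{2k+1} < j_{2k+1} be 4k+2 points in circular order. The fixed-point free involution π = ∏_{l=1}^{2k+1} (i_l j_{l+k-1}) (indices mod 2k+1) on these 4k+2 points, viewed as a perfect matching by chords, has cyclic crossing number C(2k+1, 2) − (2k+1), i.e., exactly 2k+1 of its C(2k+1,2) pairs of chords are noncrossing. -/

import Mathlib

/-- Chords `{a,b}` and `{c,d}` on circularly ordered points (labeled by their
position in the circular order) cross: they share an endpoint or interleave. -/
def crossN (a b c d : ℕ) : Prop :=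
  (a = c ∨ a = d ∨ b = c ∨ b = d) ∨
  (min a b < min c d ∧ min c d < max a b ∧ max a b < max c d) ∨
  (min c d < min a b ∧ min a b < max c d ∧ max c d < max a b)

instance : ∀ a b c d : ℕ, Decidable (crossN a b c d) := by
  unfold crossN; infer_instance

open Fin.NatCast

/-- transfer of `crossN` along a strictly monotone map -/
lemma crossN_map_iff (f : ℕ → ℕ) (N : ℕ)
    (hf : ∀ x y, y < N → x < y → f x < f y) (a b c d : ℕ)
    (ha : a < N) (hb : b < N) (hc : c < N) (hd : d < N) :
    crossN (f a) (f b) (f c) (f d) ↔ crossN a b c d := by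
  have hlt : ∀ x y, x < N → y < N → (f x < f y ↔ x < y) := by
    intro x y hx hy
    constructor
    · intro h
      by_contra hxy
      rcases Nat.lt_or_ge y x with h' | h'
      · exact absurd (hf y x hx h') (by omega)
      · have : x = y := by omega
        subst this; omega
    · exact fun h => hf x y hy h
  have heq : ∀ x y, x < N → y < N → (f x = f y ↔ x = y) := by
    intro x y hx hy
    constructor
    · intro h
      by_contra hxy
      rcases Nat.lt_or_ge x y with h' | h'
      · have := hf x y hy h'; omega
      · have := hf y x hx (by omega); omega
    · intro h; rw [h]
  have hle : ∀ x y, x < N → y < N → x ≤ y → f x ≤ f y := by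
    intro x y hx hy h
    rcases Nat.eq_or_lt_of_le h with h' | h'
    · rw [h']
    · exact le_of_lt (hf x y hy h')
  have hmin : ∀ x y, x < N → y < N → min (f x) (f y) = f (min x y) := by
    intro x y hx hy
    rcases le_total x y with h | h
    · rw [min_eq_left (hle x y hx hy h), min_eq_left h]
    · rw [min_eq_right (hle y x hy hx h), min_eq_right h]
  have hmax : ∀ x y, x < N → y < N → max (f x) (f y) = f (max x y) := by
    intro x y hx hy
    rcases le_total x y with h | h
    · rw [max_eq_right (hle x y hx hy h), max_eq_right h]
    · rw [max_eq_left (hle y x hy hx h), max_eq_left h]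
  unfold crossN
  rw [hmin a b ha hb, hmin c d hc hd, hmax a b ha hb, hmax c d hc hd,
    heq a c ha hc, heq a d ha hd, heq b c hb hc, heq b d hb hd,
    hlt (min a b) (min c d) (by omega) (by omega),
    hlt (min c d) (max a b) (by omega) (by omega),
    hlt (max a b) (max c d) (by omega) (by omega),
    hlt (min c d) (min a b) (by omega) (by omega),
    hlt (min a b) (max c d) (by omega) (by omega),
    hlt (max c d) (max a b) (by omega) (by omega)]

/-- value of `(x + 3k) mod (2k+1)` for `x < 2k+1` -/
lemma modval (k x : ℕ) (hk : 1 ≤ k) (hx : x < 2 * k + 1) :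
    (x + 3 * k) % (2 * k + 1) = if x ≤ k + 1 then x + k - 1 else x - (k + 2) := by
  rcases le_or_gt x (k + 1) with h | h
  · rw [if_pos h, Nat.mod_eq_sub_mod (by omega), Nat.mod_eq_of_lt (by omega)]
    omega
  · rw [if_neg (by omega), Nat.mod_eq_sub_mod (by omega),
      Nat.mod_eq_sub_mod (by omega), Nat.mod_eq_of_lt (by omega)]
    omega

/-- the arithmetic core: characterization of crossing pairs -/
lemma core (k a b ga gb : ℕ) (hk : 1 ≤ k) (hab : a < b) (hb : b < 2 * k + 1)
    (hga : ga = (a + 3 * k) % (2 * k + 1)) (hgb : gb = (b + 3 * k) % (2 * k + 1)) :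
    crossN (2 * a) (2 * ga + 1) (2 * b) (2 * gb + 1) ↔
      ¬(b = a + k ∨ b = a + k + 1) := by
  rw [modval k a hk (by omega)] at hga
  rw [modval k b hk hb] at hgb
  unfold crossN
  split_ifs at hga hgb <;> omega

/-- interleaved points sequence -/
def wfun (k : ℕ) (i j : Fin (2 * k + 1) → ℕ) (x : ℕ) : ℕ :=
  if h : x < 2 * (2 * k + 1) then
    (if x % 2 = 0 then i ⟨x / 2, by omega⟩ else j ⟨x / 2, by omega⟩)
  else 0

lemma wfun_adj (k : ℕ) (i j : Fin (2 * k + 1) → ℕ)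
    (hij : ∀ l, i l < j l)
    (hji : ∀ l : Fin (2 * k + 1), (h : l.val + 1 < 2 * k + 1) →
      j l < i ⟨l.val + 1, h⟩) :
    ∀ m, m + 1 < 2 * (2 * k + 1) → wfun k i j m < wfun k i j (m + 1) := by
  intro m hm
  unfold wfun
  rw [dif_pos (by omega), dif_pos hm]
  rcases Nat.even_or_odd m with he | ho
  · have h2 : m % 2 = 0 := Nat.even_iff.mp he
    rw [if_pos h2, if_neg (by omega)]
    rw [show (⟨(m+1)/2, by omega⟩ : Fin (2*k+1)) = ⟨m/2, by omega⟩ from by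
      apply Fin.ext; show (m+1)/2 = m/2; omega]
    exact hij _
  · have h2 : m % 2 = 1 := Nat.odd_iff.mp ho
    rw [if_neg (by omega), if_pos (by omega)]
    have hlt : m / 2 + 1 < 2 * k + 1 := by omega
    rw [show (⟨(m+1)/2, by omega⟩ : Fin (2*k+1)) = ⟨m/2 + 1, hlt⟩ from by
      apply Fin.ext; show (m+1)/2 = m/2 + 1; omega]
    exact hji ⟨m / 2, by omega⟩ hlt

lemma wfun_mono (k : ℕ) (i j : Fin (2 * k + 1) → ℕ)
    (hij : ∀ l, i l < j l)
    (hji : ∀ l : Fin (2 * k + 1), (h : l.val + 1 < 2 * k + 1) →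
      j l < i ⟨l.val + 1, h⟩) :
    ∀ x y, y < 2 * (2 * k + 1) → x < y → wfun k i j x < wfun k i j y := by
  intro x y
  induction y with
  | zero => omega
  | succ m IH =>
    intro hy hxy
    rcases Nat.lt_or_ge x m with h | h
    · calc wfun k i j x < wfun k i j m := IH (by omega) h
        _ < wfun k i j (m + 1) := wfun_adj k i j hij hji m hy
    · have : x = m := by omega
      subst this
      exact wfun_adj k i j hij hji x hy

lemma wfun_even (k : ℕ) (i j : Fin (2 * k + 1) → ℕ) (l : Fin (2 * k + 1)) :
    wfun k i j (2 * l.val) = i l := by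
  have hb : 2 * l.val < 2 * (2 * k + 1) := by have := l.isLt; omega
  unfold wfun
  rw [dif_pos hb, if_pos (by omega)]
  congr 1
  apply Fin.ext
  show 2 * l.val / 2 = l.val
  omega

lemma wfun_odd (k : ℕ) (i j : Fin (2 * k + 1) → ℕ) (l : Fin (2 * k + 1)) :
    wfun k i j (2 * l.val + 1) = j l := by
  have hb : 2 * l.val + 1 < 2 * (2 * k + 1) := by have := l.isLt; omega
  unfold wfun
  rw [dif_pos hb, if_neg (by omega)]
  congr 1
  apply Fin.ext
  show (2 * l.val + 1) / 2 = l.val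
  omega

lemma gval (k : ℕ) (hk : 1 ≤ k) (p : Fin (2 * k + 1)) :
    (p + (k : Fin (2 * k + 1)) - 1).val = (p.val + 3 * k) % (2 * k + 1) := by
  rw [Fin.sub_def, Fin.add_def, Fin.val_natCast, Fin.val_one',
    Nat.mod_eq_of_lt (show 1 < 2 * k + 1 by omega),
    Nat.mod_eq_of_lt (show k < 2 * k + 1 by omega)]
  show (2 * k + 1 - 1 + (p.val + k) % (2 * k + 1)) % (2 * k + 1) = _
  rw [Nat.add_mod_mod]
  congr 1
  omega

/-- cardinality of the set of `<`-ordered pairs in `Fin n × Fin n` -/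
lemma card_lt_pairs (n : ℕ) :
    (Finset.univ.filter (fun p : Fin n × Fin n => p.1 < p.2)).card =
      Nat.choose n 2 := by
  have hswap : (Finset.univ.filter (fun p : Fin n × Fin n => p.1 < p.2)).card =
      (Finset.univ.filter (fun p : Fin n × Fin n => p.2 < p.1)).card := by
    apply Finset.card_bij (fun p _ => p.swap)
    · intro p hp
      simp only [Finset.mem_filter, Finset.mem_univ, true_and] at hp ⊢
      exact hp
    · intro p hp q hq h
      exact Prod.swap_injective h
    · intro p hp
      refine ⟨p.swap, ?_, by simp⟩
      simp only [Finset.mem_filter, Finset.mem_univ, true_and] at hp ⊢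
      exact hp
  have h1 := Finset.card_filter_add_card_filter_not
    (s := (Finset.univ : Finset (Fin n × Fin n))) (p := fun p => p.1 < p.2)
  have hnotlt : Finset.univ.filter (fun p : Fin n × Fin n => ¬ p.1 < p.2) =
      Finset.univ.filter (fun p : Fin n × Fin n => p.2 < p.1) ∪
      Finset.univ.filter (fun p : Fin n × Fin n => p.1 = p.2) := by
    rw [← Finset.filter_or]
    apply Finset.filter_congr
    intro p _
    rw [Fin.lt_def, Fin.lt_def, Fin.ext_iff]
    omega
  have hdisj : Disjoint
      (Finset.univ.filter (fun p : Fin n × Fin n => p.2 < p.1))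
      (Finset.univ.filter (fun p : Fin n × Fin n => p.1 = p.2)) := by
    rw [Finset.disjoint_left]
    intro p hp hp'
    simp only [Finset.mem_filter, Finset.mem_univ, true_and] at hp hp'
    rw [Fin.lt_def] at hp
    rw [Fin.ext_iff] at hp'
    omega
  have e3 : (Finset.univ.filter (fun p : Fin n × Fin n => p.1 = p.2)).card = n := by
    rw [show (Finset.univ.filter (fun p : Fin n × Fin n => p.1 = p.2)) =
        (Finset.univ : Finset (Fin n)).image (fun a => (a, a)) from ?_]
    · rw [Finset.card_image_of_injective _ (fun a b h => (Prod.mk.injEq _ _ _ _ ▸ h).1),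
        Finset.card_univ, Fintype.card_fin]
    · ext p
      simp only [Finset.mem_filter, Finset.mem_univ, true_and, Finset.mem_image]
      constructor
      · intro h; exact ⟨p.1, by rw [Prod.ext_iff]; exact ⟨rfl, h⟩⟩
      · rintro ⟨a, rfl⟩; rfl
  rw [hnotlt, Finset.card_union_of_disjoint hdisj, e3] at h1
  have hcu : (Finset.univ : Finset (Fin n × Fin n)).card = n * n := by
    rw [Finset.card_univ, Fintype.card_prod, Fintype.card_fin]
  rw [hcu] at h1
  have hch : 2 * Nat.choose n 2 = n * n - n := by
    cases n with
    | zero => simp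
    | succ m =>
      rw [Nat.choose_two_right]
      simp only [Nat.succ_sub_one]
      rw [Nat.mul_comm (m + 1) m, Nat.mul_div_cancel' (Nat.even_mul_succ_self m).two_dvd]
      have : (m + 1) * (m + 1) = m * (m + 1) + (m + 1) := by ring
      omega
  generalize hA : n * n = A at h1 hch
  generalize hC : Nat.choose n 2 = C at hch ⊢
  omega

theorem crossingNumber_pi (k : ℕ) (hk : 1 ≤ k) (i j : Fin (2 * k + 1) → ℕ)
    (hij : ∀ l, i l < j l)
    (hji : ∀ l : Fin (2 * k + 1), (h : l.val + 1 < 2 * k + 1) →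
      j l < i ⟨l.val + 1, h⟩) :
    (Finset.univ.filter (fun p : Fin (2 * k + 1) × Fin (2 * k + 1) =>
        p.1 < p.2 ∧ crossN (i p.1) (j (p.1 + (k : Fin (2 * k + 1)) - 1))
          (i p.2) (j (p.2 + (k : Fin (2 * k + 1)) - 1)))).card =
      Nat.choose (2 * k + 1) 2 - (2 * k + 1) ∧
    (Finset.univ.filter (fun p : Fin (2 * k + 1) × Fin (2 * k + 1) =>
        p.1 < p.2 ∧ ¬ crossN (i p.1) (j (p.1 + (k : Fin (2 * k + 1)) - 1))
          (i p.2) (j (p.2 + (k : Fin (2 * k + 1)) - 1)))).card = 2 * k + 1 := by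
  have key : ∀ p : Fin (2 * k + 1) × Fin (2 * k + 1), p.1 < p.2 →
      (crossN (i p.1) (j (p.1 + (k : Fin (2 * k + 1)) - 1))
          (i p.2) (j (p.2 + (k : Fin (2 * k + 1)) - 1)) ↔
        ¬(p.2.val = p.1.val + k ∨ p.2.val = p.1.val + k + 1)) := by
    intro p hp
    rw [← wfun_even k i j p.1, ← wfun_even k i j p.2,
      ← wfun_odd k i j (p.1 + (k : Fin (2 * k + 1)) - 1),
      ← wfun_odd k i j (p.2 + (k : Fin (2 * k + 1)) - 1),
      crossN_map_iff (wfun k i j) (2 * (2 * k + 1)) (wfun_mono k i j hij hji) _ _ _ _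
        (by have := p.1.isLt; omega)
        (by have := (p.1 + (k : Fin (2 * k + 1)) - 1).isLt; omega)
        (by have := p.2.isLt; omega)
        (by have := (p.2 + (k : Fin (2 * k + 1)) - 1).isLt; omega)]
    exact core k p.1.val p.2.val _ _ hk (Fin.lt_def.mp hp) p.2.isLt
      (gval k hk p.1) (gval k hk p.2)
  -- rewrite the two filters
  have e1 : (Finset.univ.filter (fun p : Fin (2 * k + 1) × Fin (2 * k + 1) =>
        p.1 < p.2 ∧ crossN (i p.1) (j (p.1 + (k : Fin (2 * k + 1)) - 1))
          (i p.2) (j (p.2 + (k : Fin (2 * k + 1)) - 1)))) =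
      (Finset.univ.filter (fun p : Fin (2 * k + 1) × Fin (2 * k + 1) => p.1 < p.2)).filter
        (fun p => ¬(p.2.val = p.1.val + k ∨ p.2.val = p.1.val + k + 1)) := by
    rw [Finset.filter_filter]
    apply Finset.filter_congr
    intro p _
    constructor
    · exact fun h => ⟨h.1, (key p h.1).mp h.2⟩
    · exact fun h => ⟨h.1, (key p h.1).mpr h.2⟩
  have e2 : (Finset.univ.filter (fun p : Fin (2 * k + 1) × Fin (2 * k + 1) =>
        p.1 < p.2 ∧ ¬ crossN (i p.1) (j (p.1 + (k : Fin (2 * k + 1)) - 1))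
          (i p.2) (j (p.2 + (k : Fin (2 * k + 1)) - 1)))) =
      (Finset.univ.filter (fun p : Fin (2 * k + 1) × Fin (2 * k + 1) => p.1 < p.2)).filter
        (fun p => (p.2.val = p.1.val + k ∨ p.2.val = p.1.val + k + 1)) := by
    rw [Finset.filter_filter]
    apply Finset.filter_congr
    intro p _
    constructor
    · intro h
      refine ⟨h.1, ?_⟩
      by_contra hD
      exact h.2 ((key p h.1).mpr hD)
    · intro h
      exact ⟨h.1, fun hc => ((key p h.1).mp hc) h.2⟩
  -- count the noncrossing pairs
  have hnon : ((Finset.univ.filter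
        (fun p : Fin (2 * k + 1) × Fin (2 * k + 1) => p.1 < p.2)).filter
        (fun p => (p.2.val = p.1.val + k ∨ p.2.val = p.1.val + k + 1))).card
      = 2 * k + 1 := by
    rw [Finset.filter_filter]
    have hb : (Finset.univ.filter (fun p : Fin (2 * k + 1) × Fin (2 * k + 1) =>
        p.1 < p.2 ∧ (p.2.val = p.1.val + k ∨ p.2.val = p.1.val + k + 1))).card
        = (Finset.univ : Finset (Fin (2 * k + 1))).card := by
      refine Finset.card_bij'
        (fun p _ => if p.2.val = p.1.val + k then p.1 else p.2)
        (fun m _ => if h : m.val ≤ k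
          then (m, (⟨m.val + k, by have := m.isLt; omega⟩ : Fin (2 * k + 1)))
          else ((⟨m.val - (k + 1), by have := m.isLt; omega⟩ : Fin (2 * k + 1)), m))
        (fun p _ => Finset.mem_univ _) ?_ ?_ ?_
      · intro m _
        have hm := m.isLt
        simp only [Finset.mem_filter, Finset.mem_univ, true_and, Fin.lt_def]
        split_ifs with h
        · exact ⟨by show m.val < m.val + k; omega, Or.inl rfl⟩
        · exact ⟨by show m.val - (k + 1) < m.val; omega,
            Or.inr (by show m.val = m.val - (k + 1) + k + 1; omega)⟩
      · intro p hp
        simp only [Finset.mem_filter, Finset.mem_univ, true_and, Fin.lt_def] at hp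
        obtain ⟨hlt, hD⟩ := hp
        have h1 := p.1.isLt
        have h2 := p.2.isLt
        split_ifs with h h' h'
        · rw [Prod.ext_iff]
          exact ⟨rfl, Fin.ext (by show p.1.val + k = p.2.val; omega)⟩
        · exfalso; omega
        · exfalso
          have hle : p.2.val ≤ k := h'
          omega
        · rw [Prod.ext_iff]
          refine ⟨Fin.ext ?_, rfl⟩
          show p.2.val - (k + 1) = p.1.val
          omega
      · intro m _
        have hm := m.isLt
        split_ifs with h h' h'
        · rfl
        · exact absurd rfl h'
        · exfalso
          have : m.val = m.val - (k + 1) + k := h'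
          omega
        · rfl
    rw [hb, Finset.card_univ, Fintype.card_fin]
  have hL := card_lt_pairs (2 * k + 1)
  have hsplit := Finset.card_filter_add_card_filter_not
    (s := Finset.univ.filter (fun p : Fin (2 * k + 1) × Fin (2 * k + 1) => p.1 < p.2))
    (p := fun p => (p.2.val = p.1.val + k ∨ p.2.val = p.1.val + k + 1))
  rw [hL, hnon] at hsplit
  constructor
  · rw [e1]
    omega
  · rw [e2, hnon]
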